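/- Let G be a d-degenerate graph admitting a d-degeneracy ordering composed of t consecutive independent sets, and let k ≥ d+2. Then any proper k-coloring of G can be transformed into any other by a parallel recoloring schedule of length at most k^{t+1}, where each parallel step recolors an independent set and all intermediate colorings are proper. -/

import Mathlib

namespace Stmt10Helper

set_option linter.unusedSectionVars false

def Lf (k : ℕ) : ℕ → ℕ
  | 0 => 0
  | s+1 => k * Lf k s + k

lemma Lf_le {k : ℕ} (hk2 : 2 ≤ k) (s : ℕ) : Lf k s + k ≤ k ^ (s+1) := by
  induction s with
  | zero => simp [Lf]
  | succ s ih =>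
      have h1 : k * (Lf k s + k) ≤ k * k ^ (s+1) := Nat.mul_le_mul_left k ih
      have h2 : k + k ≤ k * k := by nlinarith
      have heq : Lf k (s+1) = k * Lf k s + k := rfl
      have hpow : k ^ (s+1+1) = k * k ^ (s+1) := by ring
      rw [heq, hpow]
      nlinarith [h1, h2]

variable {V : Type*} [Fintype V] [DecidableEq V] {G : SimpleGraph V}
    [DecidableRel G.Adj] {d t k : ℕ}
    {e : Fin (Fintype.card V) ≃ V} {b : Fin (Fintype.card V) → ℕ}

lemma deg_bound (hbmono : Monotone b)
    (hbind : ∀ i j, b i = b j → ¬ G.Adj (e i) (e j))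
    (hdeg : ∀ i, Set.ncard {j | G.Adj (e i) (e j) ∧ i < j} ≤ d)
    {s : ℕ} {v : V} (hv1 : t - (s+1) ≤ b (e.symm v)) (hv0 : ¬ t - s ≤ b (e.symm v)) :
    ((G.neighborFinset v).filter (fun u => t - (s+1) ≤ b (e.symm u))).card ≤ d := by
  classical
  set i := e.symm v with hi
  have hset : {j | G.Adj (e i) (e j) ∧ i < j}.ncard
      = ({j | G.Adj (e i) (e j) ∧ i < j} : Set _).toFinset.card := Set.ncard_eq_toFinset_card' _
  refine le_trans ?_ (le_trans (le_of_eq hset.symm) (hdeg i))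
  apply Finset.card_le_card_of_injOn (fun u => e.symm u)
  · intro u hu
    simp only [Finset.mem_coe, Finset.mem_filter, SimpleGraph.mem_neighborFinset] at hu
    obtain ⟨hadj, hblk⟩ := hu
    have hev : e i = v := e.apply_symm_apply v
    have hadj' : G.Adj (e i) (e (e.symm u)) := by
      rw [hev, e.apply_symm_apply]; exact hadj
    have hne : b i ≠ b (e.symm u) := fun h => hbind _ _ h hadj'
    have hlt : b i < b (e.symm u) := by omega
    have hij : i < e.symm u := by
      by_contra h
      exact absurd (hbmono (not_lt.mp h)) (not_le.mpr hlt)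
    simp only [Finset.mem_coe, Set.mem_toFinset, Set.mem_setOf_eq]
    exact ⟨hadj', hij⟩
  · intro x _ y _ h
    exact e.symm.injective h

lemma B_nonadj (hbind : ∀ i j, b i = b j → ¬ G.Adj (e i) (e j))
    {s : ℕ} {x y : V} (hx1 : t - (s+1) ≤ b (e.symm x)) (hx0 : ¬ t - s ≤ b (e.symm x))
    (hy1 : t - (s+1) ≤ b (e.symm y)) (hy0 : ¬ t - s ≤ b (e.symm y)) :
    ¬ G.Adj x y := by
  have hb : b (e.symm x) = b (e.symm y) := by omega
  have := hbind (e.symm x) (e.symm y) hb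
  simpa using this

lemma lift (hk : d + 2 ≤ k) (hbmono : Monotone b)
    (hbind : ∀ i j, b i = b j → ¬ G.Adj (e i) (e j))
    (hdeg : ∀ i, Set.ncard {j | G.Adj (e i) (e j) ∧ i < j} ≤ d)
    (s : ℕ) :
    ∀ (m : ℕ) (cs' : ℕ → V → Fin k) (γ : V → Fin k),
      (∀ v, t - s ≤ b (e.symm v) → γ v = cs' 0 v) →
      (∀ u v, G.Adj u v → t - (s+1) ≤ b (e.symm u) → t - (s+1) ≤ b (e.symm v) → γ u ≠ γ v) →
      (∀ i, i ≤ m → ∀ u v, G.Adj u v → t - s ≤ b (e.symm u) → t - s ≤ b (e.symm v) → cs' i u ≠ cs' i v) →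
      (∀ i, i < m → ∀ x y, cs' (i+1) x ≠ cs' i x → cs' (i+1) y ≠ cs' i y → ¬ G.Adj x y) →
      (∀ i, i ≤ m → ∀ v, ¬ (t - s ≤ b (e.symm v)) → cs' i v = cs' 0 v) →
      (∀ i, i < m → ∃ c : Fin k, ∀ x, cs' (i+1) x ≠ cs' i x → cs' (i+1) x = c) →
      ∃ cs : ℕ → V → Fin k,
        cs 0 = γ ∧
        (∀ v, t - s ≤ b (e.symm v) → cs (k*m) v = cs' m v) ∧
        (∀ i, i ≤ k*m → ∀ u v, G.Adj u v → t - (s+1) ≤ b (e.symm u) → t - (s+1) ≤ b (e.symm v) → cs i u ≠ cs i v) ∧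
        (∀ i, i < k*m → ∀ x y, cs (i+1) x ≠ cs i x → cs (i+1) y ≠ cs i y → ¬ G.Adj x y) ∧
        (∀ i, i ≤ k*m → ∀ v, ¬ (t - (s+1) ≤ b (e.symm v)) → cs i v = γ v) ∧
        (∀ i, i < k*m → ∃ c : Fin k, ∀ x, cs (i+1) x ≠ cs i x → cs (i+1) x = c) := by
  classical
  intro m
  induction m with
  | zero =>
      intro cs' γ hmatch hγ hprop' hsteps' hoff' hmono'
      refine ⟨fun _ => γ, rfl, fun v hv => hmatch v hv,
        fun i _ u v hadj hu hv => hγ u v hadj hu hv,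
        fun i hi => by omega, fun i _ v _ => rfl, fun i hi => by omega⟩
  | succ m ih =>
      intro cs' γ hmatch hγ hprop' hsteps' hoff' hmono'
      have hk2 : 2 ≤ k := by omega
      obtain ⟨c, hc⟩ := hmono' 0 (Nat.succ_pos m)
      set D : V → Prop := fun v =>
        (t - (s+1) ≤ b (e.symm v) ∧ ¬ t - s ≤ b (e.symm v)) ∧ γ v = c ∧
          ∃ u, G.Adj v u ∧ cs' 1 u ≠ cs' 0 u with hDd
      set Fv : V → Finset (Fin k) := fun v =>
        insert c (((G.neighborFinset v).filter (fun u => t - (s+1) ≤ b (e.symm u))).image γ) with hFvd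
      have hD_B : ∀ v, D v → (t - (s+1) ≤ b (e.symm v) ∧ ¬ t - s ≤ b (e.symm v)) := by
        intro v hv; rw [hDd] at hv; exact hv.1
      have hD_col : ∀ v, D v → γ v = c := by
        intro v hv; rw [hDd] at hv; exact hv.2.1
      have hD_intro : ∀ v, t - (s+1) ≤ b (e.symm v) → ¬ t - s ≤ b (e.symm v) → γ v = c →
          ∀ u, G.Adj v u → cs' 1 u ≠ cs' 0 u → D v := by
        intro v h1 h0 hcol u hadj hchg; rw [hDd]; exact ⟨⟨h1, h0⟩, hcol, u, hadj, hchg⟩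
      have hFcard : ∀ v, D v → (Fv v).card ≤ d + 1 := by
        intro v hv
        obtain ⟨hv1, hv0⟩ := hD_B v hv
        have h1 := deg_bound hbmono hbind hdeg hv1 hv0
        have h2 := Finset.card_image_le
          (s := (G.neighborFinset v).filter (fun u => t - (s+1) ≤ b (e.symm u))) (f := γ)
        have h3 := Finset.card_insert_le c
          (((G.neighborFinset v).filter (fun u => t - (s+1) ≤ b (e.symm u))).image γ)
        simp only [hFvd]
        omega
      set g : V → Fin k := fun v =>
        if h : ∃ x : Fin k, x ∉ Fv v then h.choose else γ v with hgd
      have hgspec : ∀ v, D v → g v ∉ Fv v := by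
        intro v hv
        have hex : ∃ x : Fin k, x ∉ Fv v := by
          by_contra hcon
          push_neg at hcon
          have hsub : (Finset.univ : Finset (Fin k)) ⊆ Fv v := fun x _ => hcon x
          have hle := Finset.card_le_card hsub
          have hcard : (Finset.univ : Finset (Fin k)).card = k := by simp
          have := hFcard v hv
          omega
        rw [hgd]
        simp only [dif_pos hex]
        exact hex.choose_spec
      have hgne_c : ∀ v, D v → g v ≠ c := by
        intro v hv h
        apply hgspec v hv
        rw [h, hFvd]
        exact Finset.mem_insert_self _ _
      have hgne_nbr : ∀ v, D v → ∀ u, G.Adj v u → t - (s+1) ≤ b (e.symm u) → g v ≠ γ u := by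
        intro v hv u hadj hu1 h
        apply hgspec v hv
        rw [h, hFvd]
        apply Finset.mem_insert_of_mem
        apply Finset.mem_image_of_mem
        simp only [Finset.mem_filter, SimpleGraph.mem_neighborFinset]
        exact ⟨hadj, hu1⟩
      set ρ : Fin k → ℕ := fun x => if x.val < c.val then x.val else x.val - 1 with hρd
      have hρlt : ∀ x : Fin k, x ≠ c → ρ x < k - 1 := by
        intro x hx
        have hxv : x.val ≠ c.val := fun h => hx (Fin.ext h)
        have h1 : x.val < k := x.isLt
        have h2 : c.val < k := c.isLt
        rw [hρd]
        simp only
        split <;> omega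
      have hρinj : ∀ x y : Fin k, x ≠ c → y ≠ c → ρ x = ρ y → x = y := by
        intro x y hx hy h
        have hxv : x.val ≠ c.val := fun h => hx (Fin.ext h)
        have hyv : y.val ≠ c.val := fun h => hy (Fin.ext h)
        rw [hρd] at h
        simp only at h
        apply Fin.ext
        split at h <;> split at h <;> omega
      set δ : V → Fin k := fun v =>
        if t - s ≤ b (e.symm v) then cs' 1 v else if D v then g v else γ v with hδd
      set seg : ℕ → V → Fin k := fun i v =>
        if i < k then (if D v ∧ ρ (g v) < i then g v else γ v) else δ v with hsegd
      have hseg0 : ∀ v, seg 0 v = γ v := by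
        intro v
        rw [hsegd]
        simp only [if_pos (show (0:ℕ) < k by omega)]
        rw [if_neg]
        rintro ⟨-, h⟩
        omega
      have hsegk : ∀ v, seg k v = δ v := by
        intro v; rw [hsegd]; simp only [lt_irrefl, if_false]
      have hsegoff : ∀ i v, ¬ (t - (s+1) ≤ b (e.symm v)) → seg i v = γ v := by
        intro i v hv
        have hD : ¬ D v := fun h => hv (hD_B v h).1
        have hA0 : ¬ t - s ≤ b (e.symm v) := by omega
        rw [hsegd, hδd]
        by_cases hik : i < k
        · simp [hik, hD]
        · simp [hik, hD, hA0]
      have hchg_lo : ∀ i, i + 1 < k → ∀ v, seg (i+1) v ≠ seg i v →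
          D v ∧ ρ (g v) = i ∧ seg (i+1) v = g v := by
        intro i hi v hv
        have hik : i < k := by omega
        rw [hsegd] at hv ⊢
        simp only [if_pos hi, if_pos hik] at hv ⊢
        by_cases hD : D v
        · by_cases hlt : ρ (g v) < i
          · simp [hD, hlt, show ρ (g v) < i + 1 by omega] at hv
          · by_cases hlt2 : ρ (g v) < i + 1
            · refine ⟨hD, by omega, by rw [if_pos ⟨hD, hlt2⟩]⟩
            · simp [hD, hlt, hlt2] at hv
        · simp [hD] at hv
      have hchg_hi : ∀ v, seg k v ≠ seg (k-1) v →
          (t - s ≤ b (e.symm v)) ∧ cs' 1 v ≠ cs' 0 v ∧ seg k v = cs' 1 v := by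
        intro v hv
        have hk1 : k - 1 < k := by omega
        rw [hsegk v] at hv ⊢
        rw [hsegd] at hv
        simp only [if_pos hk1] at hv
        rw [hδd] at hv ⊢
        simp only at hv ⊢
        by_cases hA0 : t - s ≤ b (e.symm v)
        · have hD : ¬ D v := fun h => (hD_B v h).2 hA0
          rw [if_pos hA0] at hv ⊢
          rw [if_neg (fun h => hD h.1)] at hv
          refine ⟨hA0, ?_, rfl⟩
          rw [hmatch v hA0] at hv
          exact hv
        · rw [if_neg hA0] at hv
          by_cases hD : D v
          · have hρ : ρ (g v) < k - 1 := hρlt _ (hgne_c v hD)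
            simp [hD, hρ] at hv
          · simp [hD] at hv
      have hsegprop : ∀ i, i ≤ k → ∀ u v, G.Adj u v →
          t - (s+1) ≤ b (e.symm u) → t - (s+1) ≤ b (e.symm v) → seg i u ≠ seg i v := by
        intro i hi u v hadj hu1 hv1
        by_cases hik : i < k
        · rw [hsegd]
          simp only [if_pos hik]
          by_cases hu0 : t - s ≤ b (e.symm u) <;> by_cases hv0 : t - s ≤ b (e.symm v)
          · have hDu : ¬ (D u ∧ ρ (g u) < i) := fun h => (hD_B u h.1).2 hu0
            have hDv : ¬ (D v ∧ ρ (g v) < i) := fun h => (hD_B v h.1).2 hv0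
            rw [if_neg hDu, if_neg hDv]
            exact hγ u v hadj hu1 hv1
          · have hDu : ¬ (D u ∧ ρ (g u) < i) := fun h => (hD_B u h.1).2 hu0
            rw [if_neg hDu]
            by_cases hcv : D v ∧ ρ (g v) < i
            · rw [if_pos hcv]
              exact fun h => hgne_nbr v hcv.1 u hadj.symm hu1 h.symm
            · rw [if_neg hcv]
              exact hγ u v hadj hu1 hv1
          · have hDv : ¬ (D v ∧ ρ (g v) < i) := fun h => (hD_B v h.1).2 hv0
            rw [if_neg hDv]
            by_cases hcu : D u ∧ ρ (g u) < i
            · rw [if_pos hcu]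
              exact hgne_nbr u hcu.1 v hadj hv1
            · rw [if_neg hcu]
              exact hγ u v hadj hu1 hv1
          · exact absurd hadj (B_nonadj hbind hu1 hu0 hv1 hv0)
        · have hik' : i = k := by omega
          subst hik'
          rw [hsegk u, hsegk v, hδd]
          simp only
          by_cases hu0 : t - s ≤ b (e.symm u) <;> by_cases hv0 : t - s ≤ b (e.symm v)
          · rw [if_pos hu0, if_pos hv0]
            exact hprop' 1 (by omega) u v hadj hu0 hv0
          · rw [if_pos hu0, if_neg hv0]
            by_cases hDv : D v
            · rw [if_pos hDv]
              by_cases hch : cs' 1 u = cs' 0 u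
              · rw [hch, ← hmatch u hu0]
                exact fun h => hgne_nbr v hDv u hadj.symm hu1 h.symm
              · rw [hc u hch]
                exact fun h => hgne_c v hDv h.symm
            · rw [if_neg hDv]
              by_cases hch : cs' 1 u = cs' 0 u
              · rw [hch, ← hmatch u hu0]
                exact hγ u v hadj hu1 hv1
              · rw [hc u hch]
                intro h
                exact hDv (hD_intro v hv1 hv0 h.symm u hadj.symm hch)
          · rw [if_neg hu0, if_pos hv0]
            by_cases hDu : D u
            · rw [if_pos hDu]
              by_cases hch : cs' 1 v = cs' 0 v
              · rw [hch, ← hmatch v hv0]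
                exact hgne_nbr u hDu v hadj hv1
              · rw [hc v hch]
                exact hgne_c u hDu
            · rw [if_neg hDu]
              by_cases hch : cs' 1 v = cs' 0 v
              · rw [hch, ← hmatch v hv0]
                exact hγ u v hadj hu1 hv1
              · rw [hc v hch]
                intro h
                exact hDu (hD_intro u hu1 hu0 h v hadj hch)
          · exact absurd hadj (B_nonadj hbind hu1 hu0 hv1 hv0)
      have hsegsteps : ∀ i, i < k → ∀ x y, seg (i+1) x ≠ seg i x → seg (i+1) y ≠ seg i y → ¬ G.Adj x y := by
        intro i hi x y hx hy
        by_cases hik : i + 1 < k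
        · obtain ⟨hDx, -, -⟩ := hchg_lo i hik x hx
          obtain ⟨hDy, -, -⟩ := hchg_lo i hik y hy
          exact B_nonadj hbind (hD_B x hDx).1 (hD_B x hDx).2 (hD_B y hDy).1 (hD_B y hDy).2
        · have hik' : i = k - 1 := by omega
          have hkk : i + 1 = k := by omega
          rw [hik'] at hx hy
          rw [show k - 1 + 1 = k by omega] at hx hy
          obtain ⟨-, hxch, -⟩ := hchg_hi x hx
          obtain ⟨-, hych, -⟩ := hchg_hi y hy
          exact hsteps' 0 (Nat.succ_pos m) x y hxch hych
      have hsegmono : ∀ i, i < k → ∃ cc : Fin k, ∀ x, seg (i+1) x ≠ seg i x → seg (i+1) x = cc := by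
        intro i hi
        by_cases hik : i + 1 < k
        · by_cases hex : ∃ x, seg (i+1) x ≠ seg i x
          · obtain ⟨x₀, hx₀⟩ := hex
            obtain ⟨hD₀, hρ₀, hv₀⟩ := hchg_lo i hik x₀ hx₀
            refine ⟨g x₀, ?_⟩
            intro x hx
            obtain ⟨hDx, hρx, hvx⟩ := hchg_lo i hik x hx
            rw [hvx]
            exact hρinj _ _ (hgne_c x hDx) (hgne_c x₀ hD₀) (by omega)
          · push_neg at hex
            exact ⟨c, fun x hx => absurd (hex x) hx⟩
        · refine ⟨c, ?_⟩
          intro x hx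
          have hkk : i + 1 = k := by omega
          rw [hkk] at hx ⊢
          rw [show i = k - 1 from by omega] at hx
          obtain ⟨-, hch, heq⟩ := hchg_hi x hx
          rw [heq]
          exact hc x hch
      have hδmatch : ∀ v, t - s ≤ b (e.symm v) → δ v = cs' 1 v := by
        intro v hv; rw [hδd]; simp only [if_pos hv]
      have hδprop : ∀ u v, G.Adj u v → t - (s+1) ≤ b (e.symm u) → t - (s+1) ≤ b (e.symm v) → δ u ≠ δ v := by
        intro u v hadj hu1 hv1
        have h := hsegprop k le_rfl u v hadj hu1 hv1
        rwa [hsegk u, hsegk v] at h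
      have hδoff : ∀ v, ¬ (t - (s+1) ≤ b (e.symm v)) → δ v = γ v := by
        intro v hv
        have h := hsegoff k v hv
        rw [hsegk v] at h
        exact h
      obtain ⟨cs₂, h20, h2end, h2prop, h2steps, h2off, h2mono⟩ :=
        ih (fun i => cs' (i+1)) δ hδmatch hδprop
          (fun i hi u v hadj hu hv => hprop' (i+1) (by omega) u v hadj hu hv)
          (fun i hi x y hx hy => hsteps' (i+1) (by omega) x y hx hy)
          (fun i hi v hv => by
            have h1 := hoff' (i+1) (by omega) v hv
            have h2 := hoff' 1 (by omega) v hv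
            rw [h1, h2])
          (fun i hi => hmono' (i+1) (by omega))
      set K := k * m with hKd
      have hKs : k * (m+1) = K + k := by rw [hKd]; ring
      refine ⟨fun i => if i < k then seg i else cs₂ (i - k), ?_, ?_, ?_, ?_, ?_, ?_⟩
      · funext v
        simp only [if_pos (show (0:ℕ) < k by omega)]
        exact hseg0 v
      · intro v hv
        rw [hKs]
        have h1 : ¬ K + k < k := by omega
        simp only [if_neg h1, Nat.add_sub_cancel]
        exact h2end v hv
      · intro i hi u v hadj hu1 hv1
        rw [hKs] at hi
        by_cases hik : i < k
        · simp only [if_pos hik]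
          exact hsegprop i (le_of_lt hik) u v hadj hu1 hv1
        · simp only [if_neg hik]
          exact h2prop (i - k) (by omega) u v hadj hu1 hv1
      · intro i hi x y hx hy
        rw [hKs] at hi
        by_cases hik : i + 1 < k
        · have hik0 : i < k := by omega
          simp only [if_pos hik, if_pos hik0] at hx hy
          exact hsegsteps i hik0 x y hx hy
        · by_cases hik2 : i + 1 = k
          · have hik0 : i < k := by omega
            have hne : ¬ i + 1 < k := by omega
            simp only [if_neg hne, if_pos hik0] at hx hy
            rw [show i + 1 - k = 0 from by omega] at hx hy
            rw [h20] at hx hy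
            rw [← hsegk x] at hx
            rw [← hsegk y] at hy
            rw [show i = k - 1 from by omega] at hx hy
            obtain ⟨-, hxch, -⟩ := hchg_hi x hx
            obtain ⟨-, hych, -⟩ := hchg_hi y hy
            exact hsteps' 0 (Nat.succ_pos m) x y hxch hych
          · have h1 : ¬ i < k := by omega
            have h2 : ¬ i + 1 < k := by omega
            simp only [if_neg h1, if_neg h2] at hx hy
            rw [show i + 1 - k = (i - k) + 1 from by omega] at hx hy
            exact h2steps (i - k) (by omega) x y hx hy
      · intro i hi v hv
        by_cases hik : i < k
        · simp only [if_pos hik]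
          exact hsegoff i v hv
        · simp only [if_neg hik]
          rw [hKs] at hi
          rw [h2off (i - k) (by omega) v hv]
          exact hδoff v hv
      · intro i hi
        rw [hKs] at hi
        by_cases hik : i + 1 < k
        · have hik0 : i < k := by omega
          obtain ⟨cc, hcc⟩ := hsegmono i hik0
          refine ⟨cc, ?_⟩
          intro x hx
          simp only [if_pos hik, if_pos hik0] at hx ⊢
          exact hcc x hx
        · by_cases hik2 : i + 1 = k
          · have hik0 : i < k := by omega
            have hne : ¬ i + 1 < k := by omega
            obtain ⟨cc, hcc⟩ := hsegmono (k-1) (by omega)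
            rw [show k - 1 + 1 = k from by omega] at hcc
            refine ⟨cc, ?_⟩
            intro x hx
            simp only [if_neg hne, if_pos hik0] at hx ⊢
            rw [show i + 1 - k = 0 from by omega] at hx ⊢
            rw [h20] at hx ⊢
            rw [← hsegk x] at hx ⊢
            rw [show i = k - 1 from by omega] at hx
            exact hcc x hx
          · have h1 : ¬ i < k := by omega
            have h2 : ¬ i + 1 < k := by omega
            obtain ⟨cc, hcc⟩ := h2mono (i - k) (by omega)
            refine ⟨cc, ?_⟩
            intro x hx
            simp only [if_neg h1, if_neg h2] at hx ⊢
            rw [show i + 1 - k = (i - k) + 1 from by omega] at hx ⊢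
            exact hcc x hx

lemma aux (hk : d + 2 ≤ k) (hbt : ∀ i, b i < t) (hbmono : Monotone b)
    (hbind : ∀ i j, b i = b j → ¬ G.Adj (e i) (e j))
    (hdeg : ∀ i, Set.ncard {j | G.Adj (e i) (e j) ∧ i < j} ≤ d) :
    ∀ s (σ η : V → Fin k),
      (∀ u v, G.Adj u v → t - s ≤ b (e.symm u) → t - s ≤ b (e.symm v) → σ u ≠ σ v) →
      (∀ u v, G.Adj u v → t - s ≤ b (e.symm u) → t - s ≤ b (e.symm v) → η u ≠ η v) →
      (∀ v, ¬ (t - s ≤ b (e.symm v)) → σ v = η v) →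
      ∃ cs : ℕ → V → Fin k,
        cs 0 = σ ∧ cs (Lf k s) = η ∧
        (∀ i, i ≤ Lf k s → ∀ u v, G.Adj u v → t - s ≤ b (e.symm u) → t - s ≤ b (e.symm v) → cs i u ≠ cs i v) ∧
        (∀ i, i < Lf k s → ∀ x y, cs (i+1) x ≠ cs i x → cs (i+1) y ≠ cs i y → ¬ G.Adj x y) ∧
        (∀ i, i ≤ Lf k s → ∀ v, ¬ (t - s ≤ b (e.symm v)) → cs i v = σ v) ∧
        (∀ i, i < Lf k s → ∃ c : Fin k, ∀ x, cs (i+1) x ≠ cs i x → cs (i+1) x = c) := by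
  classical
  intro s
  induction s with
  | zero =>
      intro σ η hσ hη hoff
      have hA : ∀ v : V, ¬ (t - 0 ≤ b (e.symm v)) := by
        intro v
        have := hbt (e.symm v)
        omega
      have hse : σ = η := funext fun v => hoff v (hA v)
      refine ⟨fun _ => σ, rfl, ?_, ?_, ?_, ?_, ?_⟩
      · show σ = η
        exact hse
      · intro i _ u v _ hu _
        exact absurd hu (hA u)
      · intro i hi
        simp [Lf] at hi
      · intro i _ v _
        rfl
      · intro i hi
        simp [Lf] at hi
  | succ s ihs =>
      intro σ η hσ hη hoff
      have hk2 : 2 ≤ k := by omega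
      have hsub : ∀ v : V, t - s ≤ b (e.symm v) → t - (s+1) ≤ b (e.symm v) := by
        intro v hv; omega
      set η' : V → Fin k := fun v => if t - s ≤ b (e.symm v) then η v else σ v with hη'd
      have hη'on : ∀ v, t - s ≤ b (e.symm v) → η' v = η v := by
        intro v hv; rw [hη'd]; simp only [if_pos hv]
      have hη'off : ∀ v, ¬ t - s ≤ b (e.symm v) → η' v = σ v := by
        intro v hv; rw [hη'd]; simp only [if_neg hv]
      obtain ⟨cs', hc0, hcm, hprop', hsteps', hoff', hmono'⟩ :=
        ihs σ η'
          (fun u v hadj hu hv => hσ u v hadj (hsub u hu) (hsub v hv))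
          (fun u v hadj hu hv => by
            rw [hη'on u hu, hη'on v hv]
            exact hη u v hadj (hsub u hu) (hsub v hv))
          (fun v hv => (hη'off v hv).symm)
      obtain ⟨cs₁, h10, h1end, h1prop, h1steps, h1off, h1mono⟩ :=
        lift hk hbmono hbind hdeg s (Lf k s) cs' σ
          (fun v _ => by rw [hc0])
          (fun u v hadj hu hv => hσ u v hadj hu hv)
          hprop' hsteps'
          (fun i hi v hv => by rw [hoff' i hi v hv, hc0])
          hmono'
      set K := k * Lf k s with hKd
      have hLs : Lf k (s+1) = K + k := by rw [hKd]; rfl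
      set δ : V → Fin k := cs₁ K with hδd
      have hδ0 : ∀ v, t - s ≤ b (e.symm v) → δ v = η v := by
        intro v hv
        rw [h1end v hv, hcm]
        exact hη'on v hv
      have hδoff : ∀ v, ¬ (t - (s+1) ≤ b (e.symm v)) → δ v = σ v := by
        intro v hv
        exact h1off K le_rfl v hv
      have hδprop : ∀ u v, G.Adj u v → t - (s+1) ≤ b (e.symm u) → t - (s+1) ≤ b (e.symm v) → δ u ≠ δ v := by
        intro u v hadj hu hv
        exact h1prop K le_rfl u v hadj hu hv
      set φ : ℕ → V → Fin k := fun r v =>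
        if (t - (s+1) ≤ b (e.symm v) ∧ ¬ t - s ≤ b (e.symm v)) ∧ (η v).val < r then η v else δ v with hφd
      have hφ0 : ∀ v, φ 0 v = δ v := by
        intro v
        rw [hφd]
        simp only
        rw [if_neg]
        exact fun h => Nat.not_lt_zero _ h.2
      have hφk : ∀ v, φ k v = η v := by
        intro v
        rw [hφd]
        simp only
        by_cases hB : t - (s+1) ≤ b (e.symm v) ∧ ¬ t - s ≤ b (e.symm v)
        · rw [if_pos ⟨hB, (η v).isLt⟩]
        · rw [if_neg (fun h => hB h.1)]
          by_cases hA0 : t - s ≤ b (e.symm v)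
          · exact hδ0 v hA0
          · have hA1 : ¬ t - (s+1) ≤ b (e.symm v) := fun h => hB ⟨h, hA0⟩
            rw [hδoff v hA1]
            exact hoff v hA1
      have hφchg : ∀ r v, φ (r+1) v ≠ φ r v →
          ((t - (s+1) ≤ b (e.symm v) ∧ ¬ t - s ≤ b (e.symm v)) ∧ (η v).val = r ∧ φ (r+1) v = η v) := by
        intro r v hv
        rw [hφd] at hv ⊢
        simp only at hv ⊢
        by_cases hB : t - (s+1) ≤ b (e.symm v) ∧ ¬ t - s ≤ b (e.symm v)
        · by_cases hr : (η v).val < r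
          · rw [if_pos ⟨hB, show (η v).val < r+1 by omega⟩, if_pos ⟨hB, hr⟩] at hv
            exact absurd rfl hv
          · by_cases hr2 : (η v).val < r + 1
            · refine ⟨hB, by omega, ?_⟩
              rw [if_pos ⟨hB, hr2⟩]
            · rw [if_neg (fun h => hr2 h.2), if_neg (fun h => hr h.2)] at hv
              exact absurd rfl hv
        · rw [if_neg (fun h => hB h.1), if_neg (fun h => hB h.1)] at hv
          exact absurd rfl hv
      have hφprop : ∀ r, ∀ u v, G.Adj u v → t - (s+1) ≤ b (e.symm u) → t - (s+1) ≤ b (e.symm v) → φ r u ≠ φ r v := by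
        intro r u v hadj hu1 hv1
        rw [hφd]
        simp only
        by_cases hcu : (t - (s+1) ≤ b (e.symm u) ∧ ¬ t - s ≤ b (e.symm u)) ∧ (η u).val < r <;>
          by_cases hcv : (t - (s+1) ≤ b (e.symm v) ∧ ¬ t - s ≤ b (e.symm v)) ∧ (η v).val < r
        · exact absurd hadj (B_nonadj hbind hcu.1.1 hcu.1.2 hcv.1.1 hcv.1.2)
        · rw [if_pos hcu, if_neg hcv]
          by_cases hv0 : t - s ≤ b (e.symm v)
          · rw [hδ0 v hv0]
            exact hη u v hadj hu1 hv1
          · exact absurd hadj (B_nonadj hbind hcu.1.1 hcu.1.2 hv1 hv0)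
        · rw [if_neg hcu, if_pos hcv]
          by_cases hu0 : t - s ≤ b (e.symm u)
          · rw [hδ0 u hu0]
            exact hη u v hadj hu1 hv1
          · exact absurd hadj (B_nonadj hbind hu1 hu0 hcv.1.1 hcv.1.2)
        · rw [if_neg hcu, if_neg hcv]
          exact hδprop u v hadj hu1 hv1
      have hφsteps : ∀ r, ∀ x y, φ (r+1) x ≠ φ r x → φ (r+1) y ≠ φ r y → ¬ G.Adj x y := by
        intro r x y hx hy
        obtain ⟨hBx, -, -⟩ := hφchg r x hx
        obtain ⟨hBy, -, -⟩ := hφchg r y hy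
        exact B_nonadj hbind hBx.1 hBx.2 hBy.1 hBy.2
      have hφmono : ∀ r, ∃ cc : Fin k, ∀ x, φ (r+1) x ≠ φ r x → φ (r+1) x = cc := by
        intro r
        by_cases hex : ∃ x, φ (r+1) x ≠ φ r x
        · obtain ⟨x₀, hx₀⟩ := hex
          obtain ⟨-, hval₀, heq₀⟩ := hφchg r x₀ hx₀
          refine ⟨η x₀, ?_⟩
          intro x hx
          obtain ⟨-, hval, heq⟩ := hφchg r x hx
          rw [heq]
          exact Fin.ext (by omega)
        · push_neg at hex
          exact ⟨⟨0, by omega⟩, fun x hx => absurd (hex x) hx⟩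
      refine ⟨fun i => if i < K then cs₁ i else φ (i - K), ?_, ?_, ?_, ?_, ?_, ?_⟩
      · by_cases hK : 0 < K
        · simp only [if_pos hK]
          exact h10
        · have hK0 : K = 0 := by omega
          simp only [if_neg (by omega : ¬ (0:ℕ) < K)]
          funext v
          rw [show (0:ℕ) - K = 0 from by omega, hφ0 v, hδd, hK0]
          rw [show cs₁ 0 = σ from h10]
      · rw [hLs]
        funext v
        have h1 : ¬ K + k < K := by omega
        simp only [if_neg h1, Nat.add_sub_cancel_left]
        exact hφk v
      · intro i hi u v hadj hu1 hv1
        by_cases hik : i < K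
        · simp only [if_pos hik]
          exact h1prop i (le_of_lt hik) u v hadj hu1 hv1
        · simp only [if_neg hik]
          exact hφprop (i - K) u v hadj hu1 hv1
      · intro i hi x y hx hy
        rw [hLs] at hi
        by_cases hik : i + 1 < K
        · have hik0 : i < K := by omega
          simp only [if_pos hik, if_pos hik0] at hx hy
          exact h1steps i hik0 x y hx hy
        · by_cases hik2 : i + 1 = K
          · have hik0 : i < K := by omega
            have hne : ¬ i + 1 < K := by omega
            simp only [if_neg hne, if_pos hik0] at hx hy
            rw [show i + 1 - K = 0 from by omega] at hx hy
            rw [hφ0 x] at hx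
            rw [hφ0 y] at hy
            rw [hδd] at hx hy
            rw [← hik2] at hx hy
            exact h1steps i hik0 x y hx hy
          · have h1 : ¬ i < K := by omega
            have h2 : ¬ i + 1 < K := by omega
            simp only [if_neg h1, if_neg h2] at hx hy
            rw [show i + 1 - K = (i - K) + 1 from by omega] at hx hy
            exact hφsteps (i - K) x y hx hy
      · intro i hi v hv
        by_cases hik : i < K
        · simp only [if_pos hik]
          exact h1off i (le_of_lt hik) v hv
        · simp only [if_neg hik]
          have hB : ¬ ((t - (s+1) ≤ b (e.symm v) ∧ ¬ t - s ≤ b (e.symm v)) ∧ (η v).val < i - K) :=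
            fun h => hv h.1.1
          rw [hφd]
          simp only
          rw [if_neg hB]
          exact hδoff v hv
      · intro i hi
        rw [hLs] at hi
        by_cases hik : i + 1 < K
        · have hik0 : i < K := by omega
          obtain ⟨cc, hcc⟩ := h1mono i hik0
          refine ⟨cc, ?_⟩
          intro x hx
          simp only [if_pos hik, if_pos hik0] at hx ⊢
          exact hcc x hx
        · by_cases hik2 : i + 1 = K
          · have hik0 : i < K := by omega
            have hne : ¬ i + 1 < K := by omega
            obtain ⟨cc, hcc⟩ := h1mono i hik0
            refine ⟨cc, ?_⟩
            intro x hx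
            simp only [if_neg hne, if_pos hik0] at hx ⊢
            rw [show i + 1 - K = 0 from by omega] at hx ⊢
            rw [hφ0 x] at hx ⊢
            rw [hδd] at hx ⊢
            rw [← hik2] at hx ⊢
            exact hcc x hx
          · have h1 : ¬ i < K := by omega
            have h2 : ¬ i + 1 < K := by omega
            obtain ⟨cc, hcc⟩ := hφmono (i - K)
            refine ⟨cc, ?_⟩
            intro x hx
            simp only [if_neg h1, if_neg h2] at hx ⊢
            rw [show i + 1 - K = (i - K) + 1 from by omega] at hx ⊢
            exact hcc x hx

end Stmt10Helper


theorem stmt10 {V : Type*} [Fintype V] [DecidableEq V] (G : SimpleGraph V)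
    [DecidableRel G.Adj] (d t k : ℕ) (hk : d + 2 ≤ k)
    (e : Fin (Fintype.card V) ≃ V) (b : Fin (Fintype.card V) → ℕ)
    (hbmono : Monotone b) (hbt : ∀ i, b i < t)
    (hbind : ∀ i j, b i = b j → ¬ G.Adj (e i) (e j))
    (hdeg : ∀ i, Set.ncard {j : Fin (Fintype.card V) | G.Adj (e i) (e j) ∧ i < j} ≤ d)
    (σ η : V → Fin k)
    (hσ : ∀ u v : V, G.Adj u v → σ u ≠ σ v)
    (hη : ∀ u v : V, G.Adj u v → η u ≠ η v) :
    ∃ (ℓ : ℕ) (cs : ℕ → V → Fin k),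
      ℓ ≤ k ^ (t + 1) ∧
      cs 0 = σ ∧ cs ℓ = η ∧
      (∀ i : ℕ, i ≤ ℓ → ∀ u v : V, G.Adj u v → cs i u ≠ cs i v) ∧
      (∀ i : ℕ, i < ℓ → ∀ x y : V,
        cs (i + 1) x ≠ cs i x → cs (i + 1) y ≠ cs i y → ¬ G.Adj x y) := by
  classical
  obtain ⟨cs, h0, hend, hprop, hsteps, -, -⟩ :=
    Stmt10Helper.aux hk hbt hbmono hbind hdeg t σ η
      (fun u v hadj _ _ => hσ u v hadj)
      (fun u v hadj _ _ => hη u v hadj)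
      (fun v hv => absurd (by omega : t - t ≤ b (e.symm v)) hv)
  have hbound : Stmt10Helper.Lf k t ≤ k ^ (t + 1) := by
    have := Stmt10Helper.Lf_le (show 2 ≤ k by omega) t
    omega
  exact ⟨Stmt10Helper.Lf k t, cs, hbound, h0, hend,
    fun i hi u v hadj => hprop i hi u v hadj (by omega) (by omega),
    hsteps⟩
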